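/- Let m ≥ 1 and let s₀, s₁, …, s_{2m−2} be real numbers such that the m×m Hankel matrix K with entries K_{ij} = s_{i+j−2} (1 ≤ i,j ≤ m) is positive semidefinite. Then there exist an integer p with 0 ≤ p ≤ m−1, distinct real numbers x₁, …, x_p, positive real numbers μ₁, …, μ_p, and a real number M ≥ 0 such that s_k = Σ_{i=1}^{p} μᵢ·xᵢ^k for k = 0, …, 2m−3, and s_{2m−2} = Σ_{i=1}^{p} μᵢ·xᵢ^{2m−2} + M. -/

import Mathlib

open Matrix Finset

namespace HankelMomentAux

/-- The row functional `L_v(a) = ∑_{i<m} v i * s (i+a)`. -/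
private def hrow (s : ℕ → ℝ) (m : ℕ) (v : ℕ → ℝ) (a : ℕ) : ℝ :=
  ∑ i ∈ range m, v i * s (i + a)

/-- Extend a `Fin n` vector by zero. -/
private def ext (n : ℕ) (x : Fin n → ℝ) : ℕ → ℝ := fun i => if h : i < n then x ⟨i, h⟩ else 0

private lemma sum_ext (n : ℕ) (x : Fin n → ℝ) (f : ℕ → ℝ) {N : ℕ} (hnN : n ≤ N) :
    ∑ i ∈ range N, ext n x i * f i = ∑ i : Fin n, x i * f i.val := by
  rw [← Finset.sum_subset (Finset.range_subset_range.2 hnN) (fun i _ hi => by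
    simp only [ext, dif_neg (by simpa using hi : ¬ i < n), zero_mul])]
  rw [← Fin.sum_univ_eq_sum_range (fun i => ext n x i * f i) n]
  refine Finset.sum_congr rfl fun i _ => ?_
  simp [ext, i.isLt]

private lemma form_ext {n N : ℕ} (hnN : n ≤ N) (s : ℕ → ℝ) (x : Fin n → ℝ) :
    ∑ a ∈ range N, ext n x a * hrow s N (ext n x) a
      = star x ⬝ᵥ ((Matrix.of fun i j : Fin n => s (i.val + j.val)) *ᵥ x) := by
  rw [sum_ext n x _ hnN]
  simp only [dotProduct, mulVec, of_apply, star_trivial]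
  refine Finset.sum_congr rfl fun a _ => ?_
  rw [hrow, sum_ext n x (fun i => s (i + a.val)) hnN, Finset.mul_sum, Finset.mul_sum]
  refine Finset.sum_congr rfl fun i _ => ?_
  rw [show i.val + a.val = a.val + i.val from Nat.add_comm _ _]
  ring

variable {m : ℕ} {s : ℕ → ℝ}

private lemma ext_eq_self (v : ℕ → ℝ) (hv : ∀ i, m ≤ i → v i = 0) :
    ext m (fun i : Fin m => v i.val) = v := by
  funext i
  by_cases h : i < m
  · simp [ext, h]
  · simp [ext, h, hv i (le_of_not_gt h)]

private lemma form_nonneg (hK : (Matrix.of fun i j : Fin m => s (i.val + j.val)).PosSemidef)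
    (v : ℕ → ℝ) (hv : ∀ i, m ≤ i → v i = 0) :
    0 ≤ ∑ a ∈ range m, v a * hrow s m v a := by
  have h := form_ext le_rfl s (fun i : Fin m => v i.val)
  rw [ext_eq_self v hv] at h
  rw [h]
  exact hK.dotProduct_mulVec_nonneg _

private lemma hrow_zero (hK : (Matrix.of fun i j : Fin m => s (i.val + j.val)).PosSemidef)
    (v : ℕ → ℝ) (hv : ∀ i, m ≤ i → v i = 0)
    (h0 : ∑ a ∈ range m, v a * hrow s m v a = 0) :
    ∀ a, a < m → hrow s m v a = 0 := by
  intro a ha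
  have h := form_ext le_rfl s (fun i : Fin m => v i.val)
  rw [ext_eq_self v hv] at h
  have hker := (hK.dotProduct_mulVec_zero_iff (fun i : Fin m => v i.val)).1 (by rw [← h, h0])
  have := congrFun hker ⟨a, ha⟩
  simp only [mulVec, dotProduct, of_apply, Pi.zero_apply] at this
  rw [hrow, ← Fin.sum_univ_eq_sum_range (fun i => v i * s (i + a)) m, ← this]
  refine Finset.sum_congr rfl fun i _ => ?_
  rw [show i.val + a = a + i.val from Nat.add_comm _ _]
  ring

/-- shifted vector -/
private def shv (v : ℕ → ℝ) (t : ℕ) : ℕ → ℝ := fun i => if t ≤ i then v (i - t) else 0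

private lemma hrow_shv (v : ℕ → ℝ) {e t : ℕ} (hsupp : ∀ i, e < i → v i = 0)
    (htem : t + e + 1 ≤ m) (a : ℕ) :
    hrow s m (shv v t) a = hrow s m v (t + a) := by
  rw [hrow, hrow]
  rw [Finset.range_eq_Ico, ← Finset.sum_Ico_consecutive _ (Nat.zero_le t) (by omega : t ≤ m)]
  rw [Finset.sum_eq_zero (fun i hi => by
    have : ¬ t ≤ i := by simp at hi; omega
    simp only [shv, if_neg this, zero_mul]), zero_add]
  rw [Finset.sum_Ico_eq_sum_range]
  have h1 : ∀ j ∈ range (m - t), shv v t (t + j) * s (t + j + a) = v j * s (j + (t + a)) := by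
    intro j _
    simp only [shv, le_add_iff_nonneg_right, Nat.zero_le, if_true, Nat.add_sub_cancel_left]
    rw [show t + j + a = j + (t + a) by omega]
  rw [Finset.sum_congr rfl h1, ← Finset.range_eq_Ico]
  refine Finset.sum_subset (Finset.range_subset_range.2 (by omega)) (fun i _ hi => ?_)
  rw [hsupp i (by simp at hi; omega), zero_mul]


private lemma orth_of_null (hK : (Matrix.of fun i j : Fin m => s (i.val + j.val)).PosSemidef)
    (v : ℕ → ℝ) {e : ℕ} (hsupp : ∀ i, e < i → v i = 0) (he : e + 1 ≤ m)
    (hker : ∀ a, a < m → hrow s m v a = 0) :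
    ∀ j, j + e + 3 ≤ 2*m → hrow s m v j = 0 := by
  have main : ∀ t, t + e + 2 ≤ m → ∀ a, a < m → hrow s m v (t + a) = 0 := by
    intro t
    induction t with
    | zero => intro _ a ha; simpa using hker a ha
    | succ t ih =>
      intro ht a ha
      have hform : ∑ b ∈ range m, shv v (t+1) b * hrow s m (shv v (t+1)) b = 0 := by
        refine Finset.sum_eq_zero fun b hb => ?_
        by_cases hbm : b + 1 < m
        · rw [hrow_shv v hsupp (by omega) b, show t + 1 + b = t + (b + 1) by omega,
            ih (by omega) (b+1) hbm, mul_zero]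
        · have hz : shv v (t+1) b = 0 := by
            by_cases h : t + 1 ≤ b
            · simp only [shv, if_pos h]
              exact hsupp _ (by simp at hb; omega)
            · simp [shv, h]
          rw [hz, zero_mul]
      have hz := hrow_zero hK (shv v (t+1)) (fun i hi => by
        by_cases h : t+1 ≤ i
        · simp only [shv, if_pos h]; exact hsupp _ (by omega)
        · simp [shv, h]) hform
      have := hz a ha
      rw [hrow_shv v hsupp (by omega) a] at this
      exact this
  intro j hj
  by_cases hjm : j < m
  · exact hker j hjm
  · have := main (j - (m-1)) (by omega) (m-1) (by omega)
    rw [show j - (m-1) + (m-1) = j by omega] at this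
    exact this

private lemma slack_nonneg (hK : (Matrix.of fun i j : Fin m => s (i.val + j.val)).PosSemidef)
    (g : ℕ → ℝ) {e : ℕ} (hsupp : ∀ i, e < i → g i = 0) (hge : g e = 1) (he : e + 1 ≤ m)
    (horth : ∀ j, j + e + 3 ≤ 2*m → hrow s m g j = 0) :
    0 ≤ hrow s m g (2*m - 2 - e) := by
  set t := m - 1 - e with ht
  have hsm : ∀ i, m ≤ i → shv g t i = 0 := fun i hi => by
    by_cases h : t ≤ i
    · simp only [shv, if_pos h]; exact hsupp _ (by omega)
    · simp [shv, h]
  have h1 := form_nonneg hK (shv g t) hsm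
  have h2 : ∑ a ∈ range m, shv g t a * hrow s m (shv g t) a = hrow s m g (2*m-2-e) := by
    rw [Finset.sum_eq_single_of_mem (m-1) (by simp; omega)]
    · have e1 : shv g t (m-1) = 1 := by
        simp only [shv, if_pos (by omega : t ≤ m - 1)]
        rw [show m - 1 - t = e by omega, hge]
      rw [e1, one_mul, hrow_shv g hsupp (by omega) (m-1), show t + (m-1) = 2*m-2-e by omega]
    · intro b hb hbne
      rw [hrow_shv g hsupp (by omega) b, horth (t + b) (by simp at hb; omega), mul_zero]
  rw [← h2]; exact h1


private lemma good_of_fin_null (hK : (Matrix.of fun i j : Fin m => s (i.val + j.val)).PosSemidef)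
    {n : ℕ} (hnm : n + 1 ≤ m)
    (x : ℕ → ℝ) (hxne : ∃ i, i < n ∧ x i ≠ 0) (hxsupp : ∀ i, n ≤ i → x i = 0)
    (hform : ∑ a ∈ range m, x a * hrow s m x a = 0) :
    ∃ e, e + 1 ≤ n ∧ ∃ g : ℕ → ℝ, g e = 1 ∧ (∀ i, e < i → g i = 0) ∧
      ∀ j, j + e + 3 ≤ 2*m → hrow s m g j = 0 := by
  classical
  set P : ℕ → Prop := fun i => x i ≠ 0 with hP
  set e := Nat.findGreatest P n with he
  obtain ⟨i0, hi0n, hi0⟩ := hxne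
  have hPe : P e := Nat.findGreatest_spec (le_of_lt hi0n) hi0
  have hesupp : ∀ i, e < i → x i = 0 := by
    intro i hi
    by_cases h : i ≤ n
    · by_contra hne
      exact Nat.findGreatest_is_greatest hi h hne
    · exact hxsupp i (by omega)
  have hen : e < n := by
    rcases Nat.lt_or_ge e n with h | h
    · exact h
    · exact absurd (hxsupp e h) hPe
  have hg : ∀ a, hrow s m (fun i => x i / x e) a = hrow s m x a / x e := by
    intro a; rw [hrow, hrow, Finset.sum_div]
    exact Finset.sum_congr rfl fun i _ => by ring
  refine ⟨e, by omega, fun i => x i / x e, div_self hPe,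
    fun i hi => by show x i / x e = 0; rw [hesupp i hi, zero_div], ?_⟩
  have hformg : ∑ a ∈ range m, (x a / x e) * hrow s m (fun i => x i / x e) a = 0 := by
    rw [Finset.sum_congr rfl (fun a _ => by rw [hg a])]
    have : ∑ a ∈ range m, (x a / x e) * (hrow s m x a / x e)
        = (∑ a ∈ range m, x a * hrow s m x a) / (x e * x e) := by
      rw [Finset.sum_div]; exact Finset.sum_congr rfl fun a _ => by ring
    rw [this, hform, zero_div]
  have hker := hrow_zero hK _ (fun i hi => by
    show x i / x e = 0; rw [hxsupp i (by omega), zero_div]) hformg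
  exact orth_of_null hK _ (fun i hi => by
    show x i / x e = 0; rw [hesupp i hi, zero_div]) (by omega) hker

private lemma exists_good (hK : (Matrix.of fun i j : Fin m => s (i.val + j.val)).PosSemidef)
    (hm : 2 ≤ m) :
    ∃ e, e + 1 ≤ m ∧ ∃ g : ℕ → ℝ, g e = 1 ∧ (∀ i, e < i → g i = 0) ∧
      ∀ j, j + e + 3 ≤ 2*m → hrow s m g j = 0 := by
  have hBpsd : (Matrix.of fun i j : Fin (m-1) => s (i.val + j.val)).PosSemidef :=
    hK.submatrix (fun i : Fin (m-1) => (⟨i.val, by omega⟩ : Fin m))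
  set B := (Matrix.of fun i j : Fin (m-1) => s (i.val + j.val)) with hBdef
  by_cases hPD : B.PosDef
  · have hdet : IsUnit B.det := hPD.det_pos.ne'.isUnit
    set y : Fin (m-1) → ℝ := fun j => s (j.val + (m-1)) with hy
    set u : Fin (m-1) → ℝ := B⁻¹ *ᵥ (-y) with hu
    have hBu : B *ᵥ u = -y := by
      rw [hu, Matrix.mulVec_mulVec, Matrix.mul_nonsing_inv _ hdet, Matrix.one_mulVec]
    set g : ℕ → ℝ := fun i => if h : i < m-1 then u ⟨i, h⟩ else if i = m-1 then 1 else 0 with hgdef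
    refine ⟨m-1, by omega, g, ?_, ?_, ?_⟩
    · show (if h : m-1 < m-1 then u ⟨m-1, h⟩ else if m-1 = m-1 then (1:ℝ) else 0) = 1
      rw [dif_neg (by omega), if_pos rfl]
    · intro i hi
      show (if h : i < m-1 then u ⟨i, h⟩ else if i = m-1 then (1:ℝ) else 0) = 0
      rw [dif_neg (by omega), if_neg (by omega)]
    · intro j hj
      have hjm : j < m - 1 := by omega
      have hsplit : hrow s m g j
          = (∑ i ∈ range (m-1), g i * s (i+j)) + g (m-1) * s ((m-1)+j) := by
        rw [hrow]
        conv_lhs => rw [show m = m - 1 + 1 by omega]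
        rw [Finset.sum_range_succ]
      have h1 : ∑ i ∈ range (m-1), g i * s (i+j) = ∑ i : Fin (m-1), u i * s (i.val + j) := by
        rw [← Fin.sum_univ_eq_sum_range (fun i => g i * s (i+j)) (m-1)]
        refine Finset.sum_congr rfl fun i _ => ?_
        show (if h : i.val < m-1 then u ⟨i.val, h⟩ else if i.val = m-1 then (1:ℝ) else 0) * s (i.val+j) = _
        rw [dif_pos i.isLt]
      have h2 : ∑ i : Fin (m-1), u i * s (i.val + j) = (B *ᵥ u) ⟨j, hjm⟩ := by
        simp only [hBdef, mulVec, dotProduct, of_apply]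
        refine Finset.sum_congr rfl fun i _ => ?_
        rw [show (i.val + j) = (j + i.val) from Nat.add_comm _ _]
        ring
      have h3 : g (m-1) = 1 := by
        show (if h : m-1 < m-1 then u ⟨m-1, h⟩ else if m-1 = m-1 then (1:ℝ) else 0) = 1
        rw [dif_neg (by omega), if_pos rfl]
      rw [hsplit, h1, h2, hBu, h3, one_mul]
      simp only [hy, Pi.neg_apply]
      rw [show (m-1) + j = j + (m-1) from Nat.add_comm _ _]
      ring
  · have hex : ∃ x' : Fin (m-1) → ℝ, x' ≠ 0 ∧ star x' ⬝ᵥ B *ᵥ x' = 0 := by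
      by_contra h
      push_neg at h
      exact hPD (Matrix.PosDef.of_dotProduct_mulVec_pos hBpsd.1 fun x hx => lt_of_le_of_ne (hBpsd.dotProduct_mulVec_nonneg x) (Ne.symm (h x hx)))
    obtain ⟨x', hx0, hxf⟩ := hex
    have c1 : ∃ i, i < m-1 ∧ ext (m-1) x' i ≠ 0 := by
      obtain ⟨i, hi⟩ := Function.ne_iff.mp hx0
      refine ⟨i.val, i.isLt, ?_⟩
      simpa [ext, i.isLt, Fin.eta] using hi
    have c2 : ∀ i, m-1 ≤ i → ext (m-1) x' i = 0 := by
      intro i hi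
      simp only [ext]
      rw [dif_neg (by omega : ¬ i < m-1)]
    have c3 : ∑ a ∈ range m, ext (m-1) x' a * hrow s m (ext (m-1) x') a = 0 := by
      rw [form_ext (by omega : m-1 ≤ m) s x']
      exact hxf
    obtain ⟨e, hen, g, hg1, hg2, hg3⟩ := good_of_fin_null hK (by omega : (m-1) + 1 ≤ m)
      (ext (m-1) x') c1 c2 c3
    exact ⟨e, by omega, g, hg1, hg2, hg3⟩


private def stepv (g : ℕ → ℝ) (d : ℕ) (w : ℕ → ℝ) : ℕ → ℝ :=
  fun i => if i < d then (if i = 0 then 0 else w (i-1)) - g i * w (d-1) else 0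

private def wv (g : ℕ → ℝ) (d : ℕ) : ℕ → ℕ → ℝ :=
  fun k => (stepv g d)^[k] (fun i => if i = 0 then 1 else 0)

private lemma wv_zero (g : ℕ → ℝ) (d : ℕ) : wv g d 0 = fun i => if i = 0 then 1 else 0 := rfl

private lemma wv_succ (g : ℕ → ℝ) (d : ℕ) (k : ℕ) :
    wv g d (k+1) = stepv g d (wv g d k) := Function.iterate_succ_apply' _ _ _

private lemma wv_lt {g : ℕ → ℝ} {d : ℕ} :
    ∀ k, k < d → ∀ i, wv g d k i = (if i = k then (1:ℝ) else 0) := by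
  intro k
  induction k with
  | zero => intro _ i; rfl
  | succ k ih =>
    intro hk i
    rw [wv_succ]
    simp only [stepv, ih (by omega)]
    by_cases hid : i < d
    · rw [if_pos hid, if_neg (by omega : (d-1 : ℕ) ≠ k), mul_zero, sub_zero]
      by_cases hi0 : i = 0
      · rw [if_pos hi0, if_neg (by omega)]
      · rw [if_neg hi0]
        by_cases h : i = k+1
        · rw [if_pos (by omega : i-1 = k), if_pos h]
        · rw [if_neg (by omega : ¬ i-1 = k), if_neg h]
    · rw [if_neg hid, if_neg (by omega)]

private lemma keyB {m d : ℕ} {s g : ℕ → ℝ} (hm : 2 ≤ m) (hd : 1 ≤ d) (hdm : d + 1 ≤ m)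
    (hg1 : g d = 1) (hgs : ∀ i, d < i → g i = 0)
    (horth : ∀ j, j + d + 3 ≤ 2*m → hrow s m g j = 0) :
    ∀ k, ∀ i, i + k + 2 ≤ 2*m →
      ∑ j ∈ range d, s (i + j) * wv g d k j
        = s (i + k) - (if i + k + 2 = 2*m ∧ d ≤ k then hrow s m g (2*m-2-d) else 0) := by
  intro k
  induction k with
  | zero =>
    intro i hi
    simp only [wv_lt (g := g) (d := d) 0 hd]
    rw [Finset.sum_eq_single_of_mem 0 (Finset.mem_range.2 (by omega))
      (fun b _ hb => by rw [if_neg hb, mul_zero])]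
    rw [if_pos rfl, mul_one, if_neg (by omega : ¬(i + 0 + 2 = 2*m ∧ d ≤ 0)), sub_zero]
  | succ k ih =>
    intro i hik
    by_cases hkd : k + 1 < d
    · simp only [wv_lt (k+1) hkd]
      rw [Finset.sum_eq_single_of_mem (k+1) (Finset.mem_range.2 hkd)
        (fun b _ hb => by rw [if_neg hb, mul_zero])]
      rw [if_pos rfl, mul_one, if_neg (by omega : ¬(i + (k+1) + 2 = 2*m ∧ d ≤ k+1)), sub_zero]
    · have hdk : d ≤ k + 1 := by omega
      obtain ⟨d', rfl⟩ : ∃ d', d = d' + 1 := ⟨d-1, by omega⟩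
      rw [wv_succ]
      have hexp : ∀ j ∈ range (d'+1), s (i + j) * stepv g (d'+1) (wv g (d'+1) k) j
          = s (i + j) * (if j = 0 then 0 else wv g (d'+1) k (j-1))
            - (s (i + j) * g j) * wv g (d'+1) k d' := by
        intro j hj
        simp only [stepv, if_pos (Finset.mem_range.1 hj), Nat.add_sub_cancel]
        ring
      rw [Finset.sum_congr rfl hexp, Finset.sum_sub_distrib]
      have e1 : ∑ j ∈ range (d'+1), s (i + j) * (if j = 0 then 0 else wv g (d'+1) k (j-1))
          = ∑ j ∈ range d', s ((i+1) + j) * wv g (d'+1) k j := by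
        rw [Finset.sum_range_succ']
        have hz0 : s (i + 0) * (if (0:ℕ) = 0 then (0:ℝ) else wv g (d'+1) k (0-1)) = 0 := by
          rw [if_pos rfl, mul_zero]
        rw [hz0, add_zero]
        refine Finset.sum_congr rfl fun j _ => ?_
        rw [if_neg (Nat.succ_ne_zero j), Nat.add_sub_cancel,
          show i + (j+1) = (i+1) + j by omega]
      have e2 : ∑ j ∈ range (d'+1), s ((i+1) + j) * wv g (d'+1) k j
          = (∑ j ∈ range d', s ((i+1) + j) * wv g (d'+1) k j)
              + s (i + (d'+1)) * wv g (d'+1) k d' := by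
        rw [Finset.sum_range_succ, show (i+1) + d' = i + (d'+1) by omega]
      have e3 : hrow s m g i = (∑ j ∈ range (d'+1), g j * s (j + i)) + s ((d'+1) + i) := by
        rw [hrow, ← Finset.sum_subset (Finset.range_subset_range.2 (by omega : (d'+1)+1 ≤ m))
          (fun j _ hj => by rw [hgs j (by simp at hj; omega), zero_mul]),
          Finset.sum_range_succ, hg1, one_mul]
      have hsecond : ∑ j ∈ range (d'+1), (s (i + j) * g j) * wv g (d'+1) k d'
          = (hrow s m g i - s (i + (d'+1))) * wv g (d'+1) k d' := by
        rw [← Finset.sum_mul]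
        congr 1
        rw [Finset.sum_congr rfl (fun j _ => by
          rw [show i + j = j + i by omega, mul_comm])]
        rw [e3, show (d'+1) + i = i + (d'+1) by omega]
        ring
      have e1' : ∑ j ∈ range (d'+1), s (i + j) * (if j = 0 then 0 else wv g (d'+1) k (j-1))
          = (∑ j ∈ range (d'+1), s ((i+1) + j) * wv g (d'+1) k j)
              - s (i + (d'+1)) * wv g (d'+1) k d' := by
        rw [e1, e2]; ring
      rw [e1', hsecond, ih (i+1) (by omega)]
      by_cases hcase : d' + 1 ≤ k
      · have hz : hrow s m g i = 0 := horth i (by omega)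
        rw [hz]
        have hif : (if (i+1) + k + 2 = 2*m ∧ d'+1 ≤ k then hrow s m g (2*m-2-(d'+1)) else 0)
            = (if i + (k+1) + 2 = 2*m ∧ d'+1 ≤ k+1 then hrow s m g (2*m-2-(d'+1)) else 0) := by
          by_cases h2 : i + k + 3 = 2*m
          · rw [if_pos ⟨by omega, hcase⟩, if_pos ⟨by omega, by omega⟩]
          · rw [if_neg (by omega), if_neg (by omega)]
        rw [hif, show (i+1) + k = i + (k+1) by omega]
        ring
      · have hw : wv g (d'+1) k d' = 1 := by
          rw [wv_lt k (by omega) d', if_pos (by omega : d' = k)]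
        rw [hw, if_neg (by omega : ¬((i+1) + k + 2 = 2*m ∧ d'+1 ≤ k))]
        by_cases h2 : i + (d'+1) + 2 = 2*m
        · have hieq : i = 2*m-2-(d'+1) := by omega
          rw [if_pos (⟨by omega, by omega⟩ : i + (k+1) + 2 = 2*m ∧ d'+1 ≤ k+1), ← hieq,
            show (i+1) + k = i + (k+1) by omega]
          ring
        · have hz : hrow s m g i = 0 := horth i (by omega)
          rw [hz, if_neg (by omega : ¬(i + (k+1) + 2 = 2*m ∧ d'+1 ≤ k+1)),
            show (i+1) + k = i + (k+1) by omega]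
          ring


open scoped MatrixOrder in
private lemma spectral {d : ℕ} {s g : ℕ → ℝ} (hd : 1 ≤ d)
    (hGPD : (Matrix.of fun i j : Fin d => s (i.val + j.val)).PosDef)
    (hGT : ∀ i : ℕ, i < d → ∑ l ∈ range d, s (i + l) * g l = - s (i + d)) :
    ∃ (lam mu : Fin d → ℝ), (∀ i, 0 ≤ mu i) ∧
      ∀ k, ∑ j ∈ range d, s j * wv g d k j = ∑ i, mu i * lam i ^ k := by
  classical
  set G := (Matrix.of fun i j : Fin d => s (i.val + j.val)) with hGdef
  set T := (Matrix.of (fun i j : Fin d =>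
    (if (i:ℕ) = (j:ℕ) + 1 then (1:ℝ) else 0)
      - (if (j:ℕ) = d - 1 then g i.val else 0))) with hTdef
  set e0 : Fin d → ℝ := (fun i => if (i:ℕ) = 0 then 1 else 0) with he0
  -- step 1 : iterates of the companion matrix compute `wv`
  have hwv : ∀ k, (fun i : Fin d => wv g d k i.val) = T^k *ᵥ e0 := by
    intro k
    induction k with
    | zero =>
      rw [pow_zero, Matrix.one_mulVec]
      funext i
      rw [wv_zero, he0]
    | succ k ih =>
      rw [pow_succ', ← Matrix.mulVec_mulVec, ← ih]
      funext i
      have hsum2 : ∑ j : Fin d, (if (j:ℕ) = d - 1 then g i.val else 0) * wv g d k j.val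
          = g i.val * wv g d k (d-1) := by
        rw [Finset.sum_eq_single_of_mem (⟨d-1, by omega⟩ : Fin d) (Finset.mem_univ _)
          (fun b _ hb => by
            rw [if_neg (fun hc => hb (Fin.ext (show (b:ℕ) = d - 1 by omega))), zero_mul])]
        rw [if_pos rfl]
      show wv g d (k+1) i.val = _
      rw [wv_succ]
      simp only [stepv, if_pos i.isLt, Matrix.mulVec, dotProduct, hTdef,
        Matrix.of_apply, sub_mul]
      rw [Finset.sum_sub_distrib, hsum2]
      congr 1
      by_cases hi0 : (i:ℕ) = 0
      · rw [if_pos hi0, Finset.sum_eq_zero (fun j _ => by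
          rw [if_neg (by omega), zero_mul])]
      · rw [if_neg hi0, Finset.sum_eq_single_of_mem (⟨i.val - 1, by omega⟩ : Fin d)
          (Finset.mem_univ _) (fun b _ hb => by
            rw [if_neg (fun hc => hb (Fin.ext (show (b:ℕ) = i.val - 1 by omega))), zero_mul])]
        rw [if_pos (show (i:ℕ) = ((⟨i.val - 1, by omega⟩ : Fin d):ℕ) + 1 by
          simp only [Fin.val_mk]; omega), one_mul]
  -- step 2 : G * T is the shifted Hankel matrix
  have hGTmat : G * T = Matrix.of (fun i j : Fin d => s (i.val + j.val + 1)) := by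
    ext i j
    simp only [Matrix.mul_apply, hGdef, hTdef, Matrix.of_apply, mul_sub]
    rw [Finset.sum_sub_distrib]
    by_cases hjd : (j:ℕ) = d - 1
    · have h1 : ∑ l : Fin d, s (i.val + l.val) * (if (l:ℕ) = (j:ℕ) + 1 then (1:ℝ) else 0) = 0 :=
        Finset.sum_eq_zero (fun l _ => by rw [if_neg (by omega), mul_zero])
      have h2 : ∑ l : Fin d, s (i.val + l.val) * (if (j:ℕ) = d - 1 then g l.val else 0)
          = ∑ l : Fin d, s (i.val + l.val) * g l.val := by
        refine Finset.sum_congr rfl fun l _ => by rw [if_pos hjd]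
      rw [h1, h2, Fin.sum_univ_eq_sum_range (fun l => s (i.val + l) * g l) d,
        hGT i.val i.isLt, show i.val + j.val + 1 = i.val + d by omega]
      ring
    · have h2 : ∑ l : Fin d, s (i.val + l.val) * (if (j:ℕ) = d - 1 then g l.val else 0) = 0 :=
        Finset.sum_eq_zero (fun l _ => by rw [if_neg hjd, mul_zero])
      rw [h2, sub_zero, Finset.sum_eq_single_of_mem (⟨j.val + 1, by omega⟩ : Fin d)
        (Finset.mem_univ _) (fun b _ hb => by
          rw [if_neg (fun hc => hb (Fin.ext (show (b:ℕ) = j.val + 1 by omega))), mul_zero])]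
      rw [if_pos rfl, mul_one]
      rfl
  -- step 3 : symmetry
  have hGsym : Gᵀ = G := by
    ext i j
    simp only [Matrix.transpose_apply, hGdef, Matrix.of_apply, Nat.add_comm]
  have hTGsym : (G * T)ᵀ = G * T := by
    rw [hGTmat]
    ext i j
    simp only [Matrix.transpose_apply, Matrix.of_apply]
    rw [show (j:ℕ) + i.val = i.val + j.val from Nat.add_comm _ _]
  have key : Tᵀ * G = G * T := by
    calc Tᵀ * G = Tᵀ * Gᵀ := by rw [hGsym]
    _ = (G * T)ᵀ := (Matrix.transpose_mul G T).symm
    _ = G * T := hTGsym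
  -- step 4 : square root of G
  set S := CFC.sqrt G with hSdef
  have hSsq : S * S = G := CFC.sqrt_mul_sqrt_self G hGPD.posSemidef.nonneg
  have hSsym : Sᵀ = S := by
    rw [← Matrix.conjTranspose_eq_transpose_of_trivial]
    exact (CFC.sqrt_nonneg G).posSemidef.1
  have hSdet : IsUnit S.det := by
    refine isUnit_iff_ne_zero.2 (fun h => ?_)
    have hdet : S.det * S.det = G.det := by rw [← Matrix.det_mul, hSsq]
    have hG := hGPD.det_pos
    rw [h, zero_mul] at hdet
    linarith [hdet ▸ hG]
  have hSS' : S * S⁻¹ = 1 := Matrix.mul_nonsing_inv _ hSdet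
  have hS'S : S⁻¹ * S = 1 := Matrix.nonsing_inv_mul _ hSdet
  have hSinvsym : (S⁻¹)ᵀ = S⁻¹ := by rw [Matrix.transpose_nonsing_inv, hSsym]
  -- step 5 : conjugated matrix
  set A := S * T * S⁻¹ with hAdef
  have hAk : ∀ k, A^k = S * T^k * S⁻¹ := by
    intro k
    induction k with
    | zero => rw [pow_zero, pow_zero, Matrix.mul_one, hSS']
    | succ k ih =>
      rw [pow_succ, pow_succ, ih, hAdef]
      calc S * T^k * S⁻¹ * (S * T * S⁻¹)
          = S * T^k * (S⁻¹ * S) * T * S⁻¹ := by simp only [Matrix.mul_assoc]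
        _ = S * (T^k * T) * S⁻¹ := by rw [hS'S, Matrix.mul_one]; simp only [Matrix.mul_assoc]
  have hGTk : ∀ k, G * T^k = S * (A^k * S) := by
    intro k
    rw [hAk k]
    calc G * T^k = S * S * T^k := by rw [hSsq]
    _ = S * (S * T^k * S⁻¹ * S) := by
        rw [Matrix.mul_assoc (S * T^k) S⁻¹ S, hS'S, Matrix.mul_one]
        simp only [Matrix.mul_assoc]
  -- step 6 : A is symmetric
  have hA : A.IsHermitian := by
    show Aᴴ = A
    rw [Matrix.conjTranspose_eq_transpose_of_trivial]
    have hAT : Aᵀ = S⁻¹ * Tᵀ * S := by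
      rw [hAdef, Matrix.transpose_mul, Matrix.transpose_mul, hSinvsym, hSsym,
        Matrix.mul_assoc]
    rw [hAT, hAdef]
    calc S⁻¹ * Tᵀ * S = S⁻¹ * Tᵀ * S * (S * S⁻¹) := by rw [hSS', Matrix.mul_one]
    _ = S⁻¹ * (Tᵀ * (S * S)) * S⁻¹ := by simp only [Matrix.mul_assoc]
    _ = S⁻¹ * ((S * S) * T) * S⁻¹ := by rw [hSsq, key]
    _ = S * T * S⁻¹ := by
        simp only [← Matrix.mul_assoc]
        rw [hS'S, Matrix.one_mul]
  -- step 7 : spectral theorem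
  set U : Matrix (Fin d) (Fin d) ℝ := (Matrix.IsHermitian.eigenvectorUnitary hA : Matrix (Fin d) (Fin d) ℝ) with hU
  have hU2 : U * star U = 1 := Matrix.mem_unitaryGroup_iff.1 (Matrix.IsHermitian.eigenvectorUnitary hA).2
  have hU1 : star U * U = 1 := Matrix.mem_unitaryGroup_iff'.1 (Matrix.IsHermitian.eigenvectorUnitary hA).2
  set lam : Fin d → ℝ := hA.eigenvalues with hlam
  have hspec : A = U * Matrix.diagonal lam * star U := by
    have := hA.spectral_theorem
    rwa [RCLike.ofReal_real_eq_id, Function.id_comp] at this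
  have hApow : ∀ k, A^k = U * Matrix.diagonal (fun i => lam i ^ k) * star U := by
    intro k
    induction k with
    | zero =>
      rw [pow_zero]
      have : (Matrix.diagonal (fun i : Fin d => lam i ^ 0)) = 1 := by
        simp [Matrix.diagonal_one]
      rw [this, Matrix.mul_one, hU2]
    | succ k ih =>
      rw [pow_succ, ih, hspec]
      calc U * Matrix.diagonal (fun i => lam i ^ k) * star U * (U * Matrix.diagonal lam * star U)
          = U * Matrix.diagonal (fun i => lam i ^ k) * (star U * U) * Matrix.diagonal lam * star U := by
            simp only [Matrix.mul_assoc]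
        _ = U * (Matrix.diagonal (fun i => lam i ^ k) * Matrix.diagonal lam) * star U := by
            rw [hU1, Matrix.mul_one]
            simp only [Matrix.mul_assoc]
        _ = U * Matrix.diagonal (fun i => lam i ^ (k+1)) * star U := by
            rw [Matrix.diagonal_mul_diagonal]
            have : (fun i => lam i ^ k * lam i) = fun i => lam i ^ (k+1) := by
              funext i; rw [pow_succ]
            rw [this]
  set z : Fin d → ℝ := S *ᵥ e0 with hz
  set y : Fin d → ℝ := star U *ᵥ z with hy
  refine ⟨lam, fun i => (y i)^2, fun i => sq_nonneg _, fun k => ?_⟩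
  have hge0 : G *ᵥ e0 = fun j : Fin d => s j.val := by
    funext j
    simp only [Matrix.mulVec, dotProduct, hGdef, Matrix.of_apply, he0]
    rw [Finset.sum_eq_single_of_mem (⟨0, by omega⟩ : Fin d) (Finset.mem_univ _)
      (fun b _ hb => by
        rw [if_neg (fun hc => hb (Fin.ext (show (b:ℕ) = 0 by omega))), mul_zero])]
    rw [if_pos rfl, mul_one]
    rfl
  have l1 : ∑ j ∈ range d, s j * wv g d k j = (G *ᵥ e0) ⬝ᵥ (T^k *ᵥ e0) := by
    rw [← hwv k, hge0]
    rw [← Fin.sum_univ_eq_sum_range (fun j => s j * wv g d k j) d]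
    rfl
  have l2 : (G *ᵥ e0) ⬝ᵥ (T^k *ᵥ e0) = e0 ⬝ᵥ ((G * T^k) *ᵥ e0) := by
    conv_lhs => rw [← hGsym, Matrix.mulVec_transpose]
    rw [← Matrix.dotProduct_mulVec, Matrix.mulVec_mulVec]
  have l3 : e0 ⬝ᵥ ((G * T^k) *ᵥ e0) = z ⬝ᵥ (A^k *ᵥ z) := by
    rw [hGTk k, ← Matrix.mulVec_mulVec, Matrix.dotProduct_mulVec, ← Matrix.mulVec_transpose,
      hSsym, ← Matrix.mulVec_mulVec]
  have l4 : z ⬝ᵥ (A^k *ᵥ z) = ∑ i, (y i)^2 * lam i ^ k := by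
    have hUT : Uᵀ = star U := by
      rw [Matrix.star_eq_conjTranspose, Matrix.conjTranspose_eq_transpose_of_trivial]
    rw [hApow k, ← Matrix.mulVec_mulVec, ← Matrix.mulVec_mulVec, Matrix.dotProduct_mulVec,
      ← Matrix.mulVec_transpose, hUT]
    simp only [dotProduct, Matrix.mulVec_diagonal]
    refine Finset.sum_congr rfl fun i _ => by ring
  rw [l1, l2, l3, l4]


private lemma combine {d : ℕ} (lam mu : Fin d → ℝ) (hmu : ∀ i, 0 ≤ mu i) :
    ∃ (p : ℕ) (x w : ℕ → ℝ), p ≤ d ∧ (∀ i, i < p → ∀ j, j < p → i ≠ j → x i ≠ x j) ∧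
      (∀ i, i < p → 0 < w i) ∧
      ∀ k, ∑ i ∈ range p, w i * x i ^ k = ∑ i, mu i * lam i ^ k := by
  classical
  set W : ℝ → ℝ := fun t => ∑ i ∈ Finset.univ.filter (fun i => lam i = t), mu i with hW
  set F : Finset ℝ := (Finset.univ.image lam).filter (fun t => 0 < W t) with hF
  set p := F.card with hp
  have hpd : p ≤ d := le_trans (Finset.card_filter_le _ _)
    (le_trans Finset.card_image_le (by simp))
  set iso := F.orderIsoOfFin hp.symm with hiso
  set x : ℕ → ℝ := fun i => if h : i < p then (iso ⟨i, h⟩ : ℝ) else 0 with hx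
  refine ⟨p, x, fun i => W (x i), hpd, ?_, ?_, ?_⟩
  · intro i hi j hj hij
    show ¬ _ = _
    rw [hx]
    simp only [dif_pos hi, dif_pos hj]
    intro heq
    have h2 := iso.toEquiv.injective (Subtype.coe_injective heq)
    rw [Fin.mk.injEq] at h2
    exact hij h2
  · intro i hi
    have hmem : (x i) ∈ F := by
      rw [hx]; simp only [dif_pos hi]; exact (iso ⟨i, hi⟩).2
    exact (Finset.mem_filter.1 hmem).2
  · intro k
    have h1 : ∑ i ∈ range p, W (x i) * x i ^ k = ∑ t ∈ F, W t * t ^ k := by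
      rw [← Fin.sum_univ_eq_sum_range (fun i => W (x i) * x i ^ k) p,
        ← Finset.sum_coe_sort F (fun t => W t * t ^ k),
        ← Equiv.sum_comp iso.toEquiv (fun t : F => W (t:ℝ) * (t:ℝ) ^ k)]
      refine Finset.sum_congr rfl fun i _ => ?_
      rw [hx]
      simp only [dif_pos i.isLt, Fin.eta]
      rfl
    have h2 : ∑ t ∈ F, W t * t ^ k = ∑ t ∈ Finset.univ.image lam, W t * t ^ k := by
      refine Finset.sum_subset (Finset.filter_subset _ _) (fun t ht hnt => ?_)
      have hge : 0 ≤ W t := Finset.sum_nonneg (fun i _ => hmu i)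
      have hnpos : ¬ 0 < W t := fun h => hnt (Finset.mem_filter.2 ⟨ht, h⟩)
      have hW0 : W t = 0 := by linarith
      rw [hW0, zero_mul]
    have h3 : ∑ t ∈ Finset.univ.image lam, W t * t ^ k = ∑ i, mu i * lam i ^ k := by
      rw [← Finset.sum_fiberwise_of_maps_to (g := lam)
        (fun i _ => Finset.mem_image_of_mem lam (Finset.mem_univ i))
        (fun i => mu i * lam i ^ k)]
      refine Finset.sum_congr rfl fun t _ => ?_
      rw [hW, Finset.sum_mul]
      refine Finset.sum_congr rfl fun i hi => ?_
      rw [(Finset.mem_filter.1 hi).2]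
    rw [h1, h2, h3]


end HankelMomentAux

open HankelMomentAux in
/-- **Discrete moment problem (Ahiezer–Krein).** If the `m × m` Hankel matrix built from
`s₀, …, s_{2m−2}` is positive semidefinite, then the sequence admits a representation
`s_k = Σ_{i<p} μᵢ xᵢᵏ` for `k ≤ 2m−3` with `p ≤ m−1`, distinct nodes `xᵢ`, positive weights
`μᵢ`, and `s_{2m−2} = Σ_{i<p} μᵢ xᵢ^{2m−2} + M` with `M ≥ 0`. -/
theorem hankel_moment_representation (m : ℕ) (hm : 1 ≤ m) (s : ℕ → ℝ)
    (hK : (Matrix.of fun i j : Fin m => s ((i : ℕ) + (j : ℕ))).PosSemidef) :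
    ∃ (p : ℕ) (x μ : ℕ → ℝ) (M : ℝ),
      p ≤ m - 1 ∧
      (∀ i < p, ∀ j < p, i ≠ j → x i ≠ x j) ∧
      (∀ i < p, 0 < μ i) ∧
      0 ≤ M ∧
      (∀ k < 2 * m - 2, s k = ∑ i ∈ Finset.range p, μ i * x i ^ k) ∧
      s (2 * m - 2) = (∑ i ∈ Finset.range p, μ i * x i ^ (2 * m - 2)) + M := by
  classical
  by_cases hm1 : m = 1
  · subst hm1
    have h0 : 0 ≤ s 0 := by
      have h := hK.dotProduct_mulVec_nonneg (fun _ => 1)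
      simpa [dotProduct, Matrix.mulVec, Fin.sum_univ_one] using h
    exact ⟨0, fun _ => 0, fun _ => 0, s 0, le_refl _,
      fun i hi => absurd hi (Nat.not_lt_zero i),
      fun i hi => absurd hi (Nat.not_lt_zero i), h0,
      fun k hk => absurd hk (by omega), by simp⟩
  · have hm2 : 2 ≤ m := by omega
    have hexP : ∃ e, e + 1 ≤ m ∧ ∃ g : ℕ → ℝ, g e = 1 ∧ (∀ i, e < i → g i = 0) ∧
        ∀ j, j + e + 3 ≤ 2*m → hrow s m g j = 0 := exists_good hK hm2
    set d := Nat.find hexP with hd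
    obtain ⟨hdm, g, hg1, hgs, horth⟩ := Nat.find_spec hexP
    rw [← hd] at hdm hg1 hgs horth
    have hMnn := slack_nonneg hK g hgs hg1 (by omega) horth
    by_cases hd0 : d = 0
    · rw [hd0] at hg1 hgs horth hMnn
      have heval : ∀ a, hrow s m g a = s a := by
        intro a
        rw [hrow, Finset.sum_eq_single_of_mem 0 (Finset.mem_range.2 (by omega))
          (fun b _ hb => by rw [hgs b (by omega), zero_mul]), hg1, one_mul, Nat.zero_add]
      rw [heval] at hMnn
      refine ⟨0, fun _ => 0, fun _ => 0, s (2*m-2), by omega,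
        fun i hi => absurd hi (Nat.not_lt_zero i),
        fun i hi => absurd hi (Nat.not_lt_zero i),
        by simpa using hMnn, ?_, by simpa using rfl⟩
      · intro k hk
        have := horth k (by omega)
        rw [heval] at this
        simpa using this
    · have hd1 : 1 ≤ d := by omega
      have hGpsd : (Matrix.of fun i j : Fin d => s (i.val + j.val)).PosSemidef :=
        hK.submatrix (fun i : Fin d => (⟨i.val, by omega⟩ : Fin m))
      have hGPD : (Matrix.of fun i j : Fin d => s (i.val + j.val)).PosDef := by
        by_contra hnPD
        have hex2 : ∃ x' : Fin d → ℝ, x' ≠ 0 ∧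
            star x' ⬝ᵥ ((Matrix.of fun i j : Fin d => s (i.val + j.val)) *ᵥ x') = 0 := by
          by_contra h
          push_neg at h
          exact hnPD (Matrix.PosDef.of_dotProduct_mulVec_pos hGpsd.1 fun x hx => lt_of_le_of_ne (hGpsd.dotProduct_mulVec_nonneg x) (Ne.symm (h x hx)))
        obtain ⟨x', hx0, hxf⟩ := hex2
        have c1 : ∃ i, i < d ∧ HankelMomentAux.ext d x' i ≠ 0 := by
          obtain ⟨i, hi⟩ := Function.ne_iff.mp hx0
          refine ⟨i.val, i.isLt, ?_⟩
          simpa [HankelMomentAux.ext, i.isLt, Fin.eta] using hi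
        have c2 : ∀ i, d ≤ i → HankelMomentAux.ext d x' i = 0 := by
          intro i hi
          simp only [HankelMomentAux.ext]
          rw [dif_neg (by omega : ¬ i < d)]
        have c3 : ∑ a ∈ range m, HankelMomentAux.ext d x' a * hrow s m (HankelMomentAux.ext d x') a = 0 := by
          rw [form_ext (by omega : d ≤ m) s x']
          exact hxf
        obtain ⟨e, hed, g', hg'1, hg'2, hg'3⟩ := good_of_fin_null hK hdm (HankelMomentAux.ext d x') c1 c2 c3
        exact Nat.find_min hexP (show e < d by omega) ⟨by omega, g', hg'1, hg'2, hg'3⟩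
      have hGT : ∀ i : ℕ, i < d → ∑ l ∈ range d, s (i + l) * g l = - s (i + d) := by
        intro i hi
        have e3 : hrow s m g i = (∑ l ∈ range d, g l * s (l + i)) + s (d + i) := by
          rw [hrow, ← Finset.sum_subset (Finset.range_subset_range.2 (by omega : d+1 ≤ m))
            (fun l _ hl => by rw [hgs l (by simp at hl; omega), zero_mul]),
            Finset.sum_range_succ, hg1, one_mul]
        have hz : hrow s m g i = 0 := horth i (by omega)
        rw [e3] at hz
        rw [Finset.sum_congr rfl (fun l _ => by
          rw [show i + l = l + i from Nat.add_comm _ _, mul_comm]),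
          show i + d = d + i from Nat.add_comm _ _]
        linarith
      obtain ⟨lam, mu, hmu, hrep⟩ := spectral hd1 hGPD hGT
      obtain ⟨p, x, w, hpd, hdist, hwpos, hsum⟩ := combine lam mu hmu
      have hkey := keyB hm2 hd1 hdm hg1 hgs horth
      have h5 : ∀ k, k + 3 ≤ 2*m → ∑ j ∈ range d, s j * wv g d k j = s k := by
        intro k hk
        by_cases hkd : k < d
        · simp only [wv_lt (g := g) (d := d) k hkd]
          rw [Finset.sum_eq_single_of_mem k (Finset.mem_range.2 hkd)
            (fun b _ hb => by rw [if_neg hb, mul_zero]), if_pos rfl, mul_one]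
        · have h6 := hkey k 0 (by omega)
          simp only [Nat.zero_add] at h6
          rw [if_neg (by omega : ¬(k + 2 = 2*m ∧ d ≤ k)), sub_zero] at h6
          exact h6
      have hval : ∀ k, k + 3 ≤ 2*m → s k = ∑ i ∈ range p, w i * x i ^ k := by
        intro k hk
        rw [hsum k, ← hrep k, h5 k hk]
      have htop : s (2*m-2) = (∑ i ∈ range p, w i * x i ^ (2*m-2)) + hrow s m g (2*m-2-d) := by
        have h6 := hkey (2*m-2) 0 (by omega)
        simp only [Nat.zero_add] at h6
        rw [if_pos ⟨by omega, by omega⟩] at h6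
        rw [hsum (2*m-2), ← hrep (2*m-2), h6]
        ring
      exact ⟨p, x, w, hrow s m g (2*m-2-d), by omega, hdist, hwpos, hMnn,
        fun k hk => hval k (by omega), htop⟩
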